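/- Let A be an oriented graph on a type V that is a push clique. Then any two distinct non-adjacent vertices u and v have at least two common neighbors, i.e., there exist distinct vertices w ≠ w' each adjacent in A to both u and v. -/

import Mathlib

/-- A directed graph `A` on `V` is an oriented graph: irreflexive and asymmetric. -/
def IsOriented {V : Type*} (A : V → V → Prop) : Prop :=
  (∀ v, ¬ A v v) ∧ ∀ u v, A u v → ¬ A v u

/-- `u` and `v` are adjacent in `A`. -/
def Adj {V : Type*} (A : V → V → Prop) (u v : V) : Prop :=
  A u v ∨ A v u

/-- The push of `A` by the vertex set `S`: arcs with exactly one endpoint in `S`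
are reversed. -/
def push {V : Type*} (S : Set V) (A : V → V → Prop) (u v : V) : Prop :=
  (Xor' (u ∈ S) (v ∈ S) ∧ A v u) ∨ (¬ Xor' (u ∈ S) (v ∈ S) ∧ A u v)

/-- `u` and `v` agree on `w`. -/
def AgreeOn {V : Type*} (A : V → V → Prop) (u v w : V) : Prop :=
  (A w u ∧ A w v) ∨ (A u w ∧ A v w)

/-- `u` and `v` disagree on `w`. -/
def DisagreeOn {V : Type*} (A : V → V → Prop) (u v w : V) : Prop :=
  (A u w ∧ A w v) ∨ (A w u ∧ A v w)

/-- `u` and `v` are joined by a directed 2-path in `A`. -/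
def TwoPath {V : Type*} (A : V → V → Prop) (u v : V) : Prop :=
  ∃ w, (A u w ∧ A w v) ∨ (A v w ∧ A w u)

/-- `A` is an oriented clique: any two distinct vertices are adjacent or joined
by a directed 2-path. -/
def IsOrientedClique {V : Type*} (A : V → V → Prop) : Prop :=
  ∀ u v, u ≠ v → Adj A u v ∨ TwoPath A u v

/-- `A` is a push clique: every push of `A` is an oriented clique. -/
def IsPushClique {V : Type*} (A : V → V → Prop) : Prop :=
  ∀ S : Set V, IsOrientedClique (push S A)

/-- `A` is an orientation of the simple graph `G`. -/
def IsOrientationOf {V : Type*} (A : V → V → Prop) (G : SimpleGraph V) : Prop :=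
  IsOriented A ∧ ∀ u v, Adj A u v ↔ G.Adj u v

/-- `G` is an underlying push clique. -/
def IsUnderlyingPushClique {V : Type*} (G : SimpleGraph V) : Prop :=
  ∃ A : V → V → Prop, IsOrientationOf A G ∧ IsPushClique A

/-- `G` is an underlying oriented clique. -/
def IsUnderlyingOrientedClique {V : Type*} (G : SimpleGraph V) : Prop :=
  ∃ A : V → V → Prop, IsOrientationOf A G ∧ IsOrientedClique A

theorem stmt_7 {V : Type*} (A : V → V → Prop) (hA : IsOriented A)
    (h : IsPushClique A) (u v : V) (huv : u ≠ v) (hnadj : ¬ Adj A u v) :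
    ∃ w w' : V, w ≠ w' ∧ Adj A u w ∧ Adj A v w ∧ Adj A u w' ∧ Adj A v w' := by
  obtain ⟨hirr, hasym⟩ := hA
  have hpadj : ∀ (S : Set V) (x y : V), Adj (push S A) x y ↔ Adj A x y := by
    intro S x y
    simp only [Adj, push, Xor', xor_def]
    tauto
  have hempty : ∀ x y : V, push (∅ : Set V) A x y ↔ A x y := by
    intro x y
    simp [push, Xor']
  -- first common neighbor
  obtain hadj | ⟨w, hw⟩ := h (∅ : Set V) u v huv
  · exact absurd ((hpadj _ u v).mp hadj) hnadj
  rw [hempty, hempty, hempty, hempty] at hw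
  have hwu : w ≠ u := by
    rintro rfl
    rcases hw with ⟨h1, h2⟩ | ⟨h1, h2⟩
    · exact hirr _ h1
    · exact hnadj (Or.inr h1)
  have hwv : w ≠ v := by
    rintro rfl
    rcases hw with ⟨h1, h2⟩ | ⟨h1, h2⟩
    · exact hnadj (Or.inl h1)
    · exact hirr _ h1
  set S : Set V := {u, w} with hS
  have huS : u ∈ S := by simp [hS]
  have hwS : w ∈ S := by simp [hS]
  have hvS : v ∉ S := by simp [hS, huv.symm, (Ne.symm hwv)]
  obtain hadj | ⟨w', hw'⟩ := h S u v huv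
  · exact absurd ((hpadj _ u v).mp hadj) hnadj
  have hne : w ≠ w' := by
    rintro rfl
    have hx1 : ¬ Xor' (u ∈ S) (w ∈ S) := by simp [huS, hwS, Xor']
    have hx2 : Xor' (w ∈ S) (v ∈ S) := by simp [huS, hwS, hvS, Xor']
    have hx3 : Xor' (v ∈ S) (w ∈ S) := by simp [huS, hwS, hvS, Xor']
    have hx4 : ¬ Xor' (w ∈ S) (u ∈ S) := by simp [huS, hwS, Xor']
    rcases hw' with ⟨p1, p2⟩ | ⟨p1, p2⟩
    · have a1 : A u w := by rcases p1 with ⟨hx, _⟩ | ⟨_, ha⟩; exact absurd hx hx1; exact ha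
      have a2 : A v w := by rcases p2 with ⟨_, ha⟩ | ⟨hx, _⟩; exact ha; exact absurd hx2 hx
      rcases hw with ⟨h1, h2⟩ | ⟨h1, h2⟩
      · exact hasym _ _ h2 a2
      · exact hasym _ _ h2 a1
    · have a1 : A w v := by rcases p1 with ⟨_, ha⟩ | ⟨hx, _⟩; exact ha; exact absurd hx3 hx
      have a2 : A w u := by rcases p2 with ⟨hx, _⟩ | ⟨_, ha⟩; exact absurd hx hx4; exact ha
      rcases hw with ⟨h1, h2⟩ | ⟨h1, h2⟩
      · exact hasym _ _ h1 a2
      · exact hasym _ _ h1 a1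
  have hu' : Adj A u w' ∧ Adj A v w' := by
    rcases hw' with ⟨p1, p2⟩ | ⟨p1, p2⟩
    · exact ⟨(hpadj S u w').mp (Or.inl p1), (hpadj S v w').mp (Or.inr p2)⟩
    · exact ⟨(hpadj S u w').mp (Or.inr p2), (hpadj S v w').mp (Or.inl p1)⟩
  have hu : Adj A u w ∧ Adj A v w := by
    rcases hw with ⟨h1, h2⟩ | ⟨h1, h2⟩
    · exact ⟨Or.inl h1, Or.inr h2⟩
    · exact ⟨Or.inr h2, Or.inl h1⟩
  exact ⟨w, w', hne, hu.1, hu.2, hu'.1, hu'.2⟩
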